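/- arXiv:gr-qc/0212085 — 5 statements merged into one kernel-verified Lean document; each statement's English description precedes it below -/
import Mathlib

section
/- Let A be a 2-form on ℝ⁴ (a skew-symmetric bilinear form) and let Â be the associated endomorphism. Set P := Â∘Â − (1/4)·tr(Â∘Â)·id. Then 4·(P∘P) = tr(P∘P)·id. (This is the algebraic Rainich/Collinson condition: the traceless part of the square of any skew-symmetric tensor in 4 dimensions has square proportional to the identity.) -/
open Matrix Real

/-- Spacetime `ℝ⁴` with the standard basis. -/
abbrev V4 : Type := Fin 4 → ℝ

/-- `4×4` real matrices: components of bilinear forms / endomorphisms of `ℝ⁴`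
in the standard basis `(e₀,e₁,e₂,e₃)`. -/
abbrev Mat4 : Type := Matrix (Fin 4) (Fin 4) ℝ

/-- The Minkowski metric `diag(-1,1,1,1)` (it equals its own inverse). -/
noncomputable def ηm : Mat4 := Matrix.diagonal ![-1, 1, 1, 1]

/-- The Minkowski bilinear form `η(x,y) = -x₀y₀ + x₁y₁ + x₂y₂ + x₃y₃`. -/
noncomputable def ηb (x y : V4) : ℝ := x ⬝ᵥ ηm *ᵥ y

/-- A vector `x` is timelike if `η(x,x) < 0`. -/
noncomputable def Timelike (x : V4) : Prop := ηb x x < 0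

/-- Evaluation of the bilinear form with component matrix `B`:
`B(x,y) = Σ xᵅ B_{αβ} yᵝ`. -/
noncomputable def bil (B : Mat4) (x y : V4) : ℝ := x ⬝ᵥ B *ᵥ y

/-- A 2-form is a skew-symmetric bilinear form. -/
noncomputable def IsTwoForm (B : Mat4) : Prop := Bᵀ = -B

/-- The endomorphism `B̂` associated with the bilinear form `B`, i.e. the unique
endomorphism with `η(B̂x, y) = B(x,y)` for all `x, y`.  (Indeed
`ηb (hat B *ᵥ x) y = bil B x y`.) -/
noncomputable def hat (B : Mat4) : Mat4 := ηm * Bᵀ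

/-- The totally antisymmetric Levi-Civita symbol on four indices, `ε₀₁₂₃ = 1`. -/
noncomputable def lc (a b c d : Fin 4) : ℝ :=
  (((b : ℕ) : ℝ) - ((a : ℕ) : ℝ)) * (((c : ℕ) : ℝ) - ((a : ℕ) : ℝ)) *
    (((d : ℕ) : ℝ) - ((a : ℕ) : ℝ)) * (((c : ℕ) : ℝ) - ((b : ℕ) : ℝ)) *
    (((d : ℕ) : ℝ) - ((b : ℕ) : ℝ)) * (((d : ℕ) : ℝ) - ((c : ℕ) : ℝ)) / 12

/-- The Hodge dual of a 2-form:
`(*F)(e_α,e_β) = (1/2) Σ ε_{αβγδ} η^{γμ} η^{δν} F(e_μ,e_ν)`. -/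
noncomputable def hodge (F : Mat4) : Mat4 :=
  Matrix.of fun α β => (1/2) * ∑ γ, ∑ δ, ∑ μ, ∑ ν, lc α β γ δ * ηm γ μ * ηm δ ν * F μ ν

/-- A unitary 2-form: `tr(Û∘Û) = 2` and `tr(Û∘(*U)̂) = 0`. -/
noncomputable def IsUnitary (U : Mat4) : Prop :=
  IsTwoForm U ∧ (hat U * hat U).trace = 2 ∧ (hat U * hat (hodge U)).trace = 0

/-- An endomorphism `L` is η-self-adjoint if `η(Lx,y) = η(x,Ly)` for all `x, y`. -/
noncomputable def SelfAdj (L : Mat4) : Prop := ∀ x y : V4, ηb (L *ᵥ x) y = ηb x (L *ᵥ y)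
set_option maxHeartbeats 1600000 in
private lemma aux_P (a1 a2 a3 a4 a5 a6 : ℝ)
    (B : Mat4) (hB : B = !![0,a1,a2,a3; a1,0,-a4,-a5; a2,a4,0,-a6; a3,a5,a6,0]) :
    B * B - ((1/4) * (B * B).trace) • (1 : Mat4) =
    !![(1/2)*(a1*a1+a2*a2+a3*a3+a4*a4+a5*a5+a6*a6), a3*a5+a2*a4, a3*a6-a1*a4, -(a2*a6)-a1*a5;
       -(a3*a5)-a2*a4, (1/2)*(a1*a1-a2*a2-a3*a3-a4*a4-a5*a5+a6*a6), a1*a2-a5*a6, a4*a6+a1*a3;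
       a1*a4-a3*a6, a1*a2-a5*a6, (1/2)*(-(a1*a1)+a2*a2-a3*a3-a4*a4+a5*a5-a6*a6), a2*a3-a4*a5;
       a2*a6+a1*a5, a4*a6+a1*a3, a2*a3-a4*a5, (1/2)*(-(a1*a1)-a2*a2+a3*a3+a4*a4-a5*a5-a6*a6)] := by
  subst hB
  ext i j
  fin_cases i <;> fin_cases j <;>
    · simp [Matrix.mul_apply, Matrix.trace, Matrix.diag, Fin.sum_univ_four,
        Matrix.sub_apply, Matrix.smul_apply, Matrix.one_apply]
      ring

set_option maxHeartbeats 1600000 in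
lemma aux_PP (a1 a2 a3 a4 a5 a6 : ℝ) (P : Mat4)
    (hP : P = !![(1/2)*(a1*a1+a2*a2+a3*a3+a4*a4+a5*a5+a6*a6), a3*a5+a2*a4, a3*a6-a1*a4, -(a2*a6)-a1*a5;
       -(a3*a5)-a2*a4, (1/2)*(a1*a1-a2*a2-a3*a3-a4*a4-a5*a5+a6*a6), a1*a2-a5*a6, a4*a6+a1*a3;
       a1*a4-a3*a6, a1*a2-a5*a6, (1/2)*(-(a1*a1)+a2*a2-a3*a3-a4*a4+a5*a5-a6*a6), a2*a3-a4*a5;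
       a2*a6+a1*a5, a4*a6+a1*a3, a2*a3-a4*a5, (1/2)*(-(a1*a1)-a2*a2+a3*a3+a4*a4-a5*a5-a6*a6)]) :
    P * P = (((a1*a1+a2*a2+a3*a3-a4*a4-a5*a5-a6*a6)/2)^2 + (a1*a6-a2*a5+a3*a4)^2) • (1 : Mat4) := by
  subst hP
  ext i j
  fin_cases i <;> fin_cases j <;>
    · simp [Matrix.mul_apply, Fin.sum_univ_four, Matrix.smul_apply, Matrix.one_apply]
      ring

/-- The algebraic Rainich/Collinson condition: the traceless part of the square
of any skew-symmetric tensor in 4 dimensions has square proportional to the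
identity. -/
theorem stmt0 (A : Mat4) (hA : IsTwoForm A) (P : Mat4)
    (hP : P = hat A * hat A - ((1/4) * (hat A * hat A).trace) • (1 : Mat4)) :
    (4 : ℝ) • (P * P) = (P * P).trace • (1 : Mat4) := by
  have hskew : ∀ i j : Fin 4, A j i = - A i j := by
    intro i j
    have := congrFun (congrFun hA i) j
    simpa [Matrix.transpose_apply, Matrix.neg_apply] using this
  have hhat : hat A = !![0, A 0 1, A 0 2, A 0 3;
      A 0 1, 0, -(A 1 2), -(A 1 3);
      A 0 2, A 1 2, 0, -(A 2 3);
      A 0 3, A 1 3, A 2 3, 0] := by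
    ext i j
    have h00 : A 0 0 = 0 := by have := hskew 0 0; linarith
    have h11 : A 1 1 = 0 := by have := hskew 1 1; linarith
    have h22 : A 2 2 = 0 := by have := hskew 2 2; linarith
    have h33 : A 3 3 = 0 := by have := hskew 3 3; linarith
    fin_cases i <;> fin_cases j <;>
      simp [hat, ηm, Matrix.mul_apply, Fin.sum_univ_four, Matrix.diagonal,
        h00, h11, h22, h33, hskew 0 1, hskew 0 2, hskew 0 3,
        hskew 1 2, hskew 1 3, hskew 2 3]
  set a1 := A 0 1; set a2 := A 0 2; set a3 := A 0 3
  set a4 := A 1 2; set a5 := A 1 3; set a6 := A 2 3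
  have hPeq := aux_P a1 a2 a3 a4 a5 a6 (hat A) hhat
  rw [← hP] at hPeq
  have hPP := aux_PP a1 a2 a3 a4 a5 a6 P hPeq
  rw [hPP, smul_smul, Matrix.trace_smul, Matrix.trace_one]
  congr 1
  simp [Fintype.card_fin, smul_eq_mul]
  ring
end

section
/- For every 2-form F on ℝ⁴, the Hodge dual satisfies the square identity (*F)̂∘(*F)̂ = F̂∘F̂ − (1/2)·tr(F̂∘F̂)·id. In particular tr((*F)̂∘(*F)̂) = −tr(F̂∘F̂). -/
open Matrix Real

set_option maxHeartbeats 2000000 in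
lemma skew_eq (F : Mat4) (hF : IsTwoForm F) :
    F = !![0, F 0 1, F 0 2, F 0 3; -F 0 1, 0, F 1 2, F 1 3;
          -F 0 2, -F 1 2, 0, F 2 3; -F 0 3, -F 1 3, -F 2 3, 0] := by
  have hskew : ∀ i j, F j i = -F i j := fun i j => by
    have := congrFun (congrFun hF i) j
    simpa [Matrix.transpose_apply] using this
  have h0 : ∀ i, F i i = 0 := fun i => by have := hskew i i; linarith
  ext i j
  fin_cases i <;> fin_cases j <;> simp <;>
    first
      | exact h0 _
      | exact hskew _ _

set_option maxHeartbeats 2000000 in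
lemma hodge_skew (a b c d e f : ℝ) :
    hodge !![0,a,b,c;-a,0,d,e;-b,-d,0,f;-c,-e,-f,0] =
    !![0,f,-e,d; -f,0,-c,b; e,c,0,-a; -d,-b,a,0] := by
  have h3 : ((3:Fin 4):ℕ) = 3 := rfl
  ext i j
  fin_cases i <;> fin_cases j <;>
    simp [hodge, lc, ηm, Fin.sum_univ_four, Matrix.diagonal, h3] <;> ring

set_option maxHeartbeats 2000000 in
lemma key (a b c d e f : ℝ) :
    hat (hodge !![0,a,b,c;-a,0,d,e;-b,-d,0,f;-c,-e,-f,0]) *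
      hat (hodge !![0,a,b,c;-a,0,d,e;-b,-d,0,f;-c,-e,-f,0]) =
      hat !![0,a,b,c;-a,0,d,e;-b,-d,0,f;-c,-e,-f,0] *
        hat !![0,a,b,c;-a,0,d,e;-b,-d,0,f;-c,-e,-f,0] -
        ((1/2) * (hat !![0,a,b,c;-a,0,d,e;-b,-d,0,f;-c,-e,-f,0] *
          hat !![0,a,b,c;-a,0,d,e;-b,-d,0,f;-c,-e,-f,0]).trace) • (1 : Mat4) ∧
    (hat (hodge !![0,a,b,c;-a,0,d,e;-b,-d,0,f;-c,-e,-f,0]) *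
      hat (hodge !![0,a,b,c;-a,0,d,e;-b,-d,0,f;-c,-e,-f,0])).trace =
      -(hat !![0,a,b,c;-a,0,d,e;-b,-d,0,f;-c,-e,-f,0] *
        hat !![0,a,b,c;-a,0,d,e;-b,-d,0,f;-c,-e,-f,0]).trace := by
  rw [hodge_skew]
  constructor
  · ext i j
    fin_cases i <;> fin_cases j <;>
      simp [hat, ηm, Matrix.mul_apply, Matrix.trace, Fin.sum_univ_four,
        Matrix.transpose_apply, Matrix.transpose, Matrix.vecHead, Matrix.vecTail, Function.comp, Matrix.diagonal, Matrix.one_apply, Matrix.smul_apply] <;> ring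
  · simp [hat, ηm, Matrix.mul_apply, Matrix.trace, Fin.sum_univ_four, Matrix.transpose_apply, Matrix.transpose, Matrix.vecHead, Matrix.vecTail, Function.comp, Matrix.diagonal]
    ring

/-- The Hodge dual square identity
`(*F)̂∘(*F)̂ = F̂∘F̂ - (1/2)tr(F̂∘F̂)·id`, and `tr((*F)̂∘(*F)̂) = -tr(F̂∘F̂)`. -/
theorem stmt1 (F : Mat4) (hF : IsTwoForm F) :
    hat (hodge F) * hat (hodge F) =
      hat F * hat F - ((1/2) * (hat F * hat F).trace) • (1 : Mat4) ∧
    (hat (hodge F) * hat (hodge F)).trace = -(hat F * hat F).trace := by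
  rw [skew_eq F hF]
  exact key _ _ _ _ _ _
end

section
/- For a 2-form F on ℝ⁴ define its energy (Maxwell–Minkowski) tensor as the endomorphism T := −(1/2)(F̂∘F̂ + (*F)̂∘(*F)̂). Then: (i) T = −(F̂∘F̂ − (1/4)·tr(F̂∘F̂)·id), i.e. T is minus the traceless part of F̂∘F̂; (ii) tr T = 0; (iii) 4·(T∘T) = tr(T∘T)·id; (iv) tr(T∘T) = (1/4)·[ (tr(F̂∘F̂))² + (tr(F̂∘(*F)̂))² ]; in particular tr(T∘T) ≠ 0 if and only if F is regular (i.e. the two invariants tr(F̂∘F̂) and tr(F̂∘(*F)̂) do not both vanish). -/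
open Matrix Real

/- Auxiliary lemmas -/

lemma finv0 : ((0:Fin 4):ℕ) = 0 := rfl
lemma finv1 : ((1:Fin 4):ℕ) = 1 := rfl
lemma finv2 : ((2:Fin 4):ℕ) = 2 := rfl
lemma finv3 : ((3:Fin 4):ℕ) = 3 := rfl

lemma ηm_eq : ηm = !![-1,0,0,0;0,1,0,0;0,0,1,0;0,0,0,1] := by
  ext i j
  fin_cases i <;> fin_cases j <;>
    simp [ηm, Matrix.diagonal, Matrix.vecHead, Matrix.vecTail]

lemma hodge_apply (F : Mat4) (α β : Fin 4) :
    hodge F α β = (1/2) * ∑ γ, ∑ δ, lc α β γ δ * ηm γ γ * ηm δ δ * F γ δ := by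
  unfold hodge
  simp only [Matrix.of_apply]
  congr 1
  refine Finset.sum_congr rfl fun γ _ => Finset.sum_congr rfl fun δ _ => ?_
  rw [Finset.sum_eq_single γ]
  · rw [Finset.sum_eq_single δ]
    · intro ν _ hν
      simp [ηm, Matrix.diagonal_apply_ne _ (Ne.symm hν)]
    · simp
  · intro μ _ hμ
    simp [ηm, Matrix.diagonal_apply_ne _ (Ne.symm hμ), Finset.sum_eq_zero]
  · simp

lemma hodge_explicit (a b c d e f : ℝ) :
    hodge !![0,a,b,c;-a,0,d,e;-b,-d,0,f;-c,-e,-f,0] =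
      !![0,f,-e,d;-f,0,-c,b;e,c,0,-a;-d,-b,a,0] := by
  ext α β
  rw [hodge_apply]
  fin_cases α <;> fin_cases β <;>
    norm_num [lc, ηm_eq, Fin.sum_univ_four, finv0, finv1, finv2, finv3, Matrix.cons_val_two, Matrix.cons_val_three, Matrix.cons_val_one, Matrix.cons_val_zero] <;> ring

lemma hat_explicit (p q r s t u v w x y z aa bb cc dd ee : ℝ) :
    hat !![p,q,r,s; t,u,v,w; x,y,z,aa; bb,cc,dd,ee] =
      !![-p,-t,-x,-bb; q,u,y,cc; r,v,z,dd; s,w,aa,ee] := by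
  ext i j
  fin_cases i <;> fin_cases j <;>
    simp [hat, ηm_eq, Matrix.mul_apply, Fin.sum_univ_four, Matrix.transpose_apply,
      Matrix.vecHead, Matrix.vecTail]

lemma quarter_ne (p q : ℝ) :
    (1/4) * (p^2 + q^2) ≠ 0 ↔ ¬(p = 0 ∧ q = 0) := by
  constructor
  · intro h hpq
    exact h (by rw [hpq.1, hpq.2]; ring)
  · intro h hz
    apply h
    constructor <;> nlinarith [sq_nonneg p, sq_nonneg q]

set_option maxHeartbeats 2000000 in
lemma key_lemma (a b c d e f : ℝ) (A B TT : Mat4)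
    (hA : A = !![0,a,b,c;a,0,-d,-e;b,d,0,-f;c,e,f,0])
    (hB : B = !![0,f,-e,d;f,0,c,-b;-e,-c,0,a;d,b,-a,0])
    (hTT : TT = (-(1/2) : ℝ) • (A*A + B*B)) :
    TT = -(A*A - ((1/4) * (A*A).trace) • (1:Mat4)) ∧
    TT.trace = 0 ∧
    (4:ℝ) • (TT * TT) = (TT * TT).trace • (1:Mat4) ∧
    (TT * TT).trace = (1/4) * (((A*A).trace)^2 + ((A*B).trace)^2) ∧
    ((TT * TT).trace ≠ 0 ↔ ¬((A*A).trace = 0 ∧ (A*B).trace = 0)) := by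
  subst hA hB hTT
  have hTex : ((-(1/2) : ℝ) •
      ((!![0,a,b,c;a,0,-d,-e;b,d,0,-f;c,e,f,0] : Mat4) * !![0,a,b,c;a,0,-d,-e;b,d,0,-f;c,e,f,0]
        + (!![0,f,-e,d;f,0,c,-b;-e,-c,0,a;d,b,-a,0] : Mat4) * !![0,f,-e,d;f,0,c,-b;-e,-c,0,a;d,b,-a,0])) =
      !![-(1/2)*(a*a+b*b+c*c+d*d+e*e+f*f), -(b*d)-c*e, a*d-c*f, a*e+b*f;
         b*d+c*e, (1/2)*(-(a*a)+b*b+c*c+d*d+e*e-f*f), -(a*b)+e*f, -(a*c)-d*f;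
         -(a*d)+c*f, -(a*b)+e*f, (1/2)*(a*a-b*b+c*c+d*d-e*e+f*f), -(b*c)+d*e;
         -(a*e)-b*f, -(a*c)-d*f, -(b*c)+d*e, (1/2)*(a*a+b*b-c*c-d*d+e*e+f*f)] := by
    ext i j
    fin_cases i <;> fin_cases j <;>
      simp [Matrix.mul_apply, Fin.sum_univ_four] <;> ring
  rw [hTex]
  have hQ : ((!![-(1/2)*(a*a+b*b+c*c+d*d+e*e+f*f), -(b*d)-c*e, a*d-c*f, a*e+b*f;
         b*d+c*e, (1/2)*(-(a*a)+b*b+c*c+d*d+e*e-f*f), -(a*b)+e*f, -(a*c)-d*f;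
         -(a*d)+c*f, -(a*b)+e*f, (1/2)*(a*a-b*b+c*c+d*d-e*e+f*f), -(b*c)+d*e;
         -(a*e)-b*f, -(a*c)-d*f, -(b*c)+d*e, (1/2)*(a*a+b*b-c*c-d*d+e*e+f*f)] : Mat4) * !![-(1/2)*(a*a+b*b+c*c+d*d+e*e+f*f), -(b*d)-c*e, a*d-c*f, a*e+b*f;
         b*d+c*e, (1/2)*(-(a*a)+b*b+c*c+d*d+e*e-f*f), -(a*b)+e*f, -(a*c)-d*f;
         -(a*d)+c*f, -(a*b)+e*f, (1/2)*(a*a-b*b+c*c+d*d-e*e+f*f), -(b*c)+d*e;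
         -(a*e)-b*f, -(a*c)-d*f, -(b*c)+d*e, (1/2)*(a*a+b*b-c*c-d*d+e*e+f*f)]) = ((1/4)*(a*a+b*b+c*c-d*d-e*e-f*f)*(a*a+b*b+c*c-d*d-e*e-f*f) + (a*f-b*e+c*d)*(a*f-b*e+c*d)) • (1:Mat4) := by
    ext i j
    fin_cases i <;> fin_cases j <;>
      simp [Matrix.mul_apply, Fin.sum_univ_four, Matrix.one_apply] <;> ring
  have h4 : ((!![-(1/2)*(a*a+b*b+c*c+d*d+e*e+f*f), -(b*d)-c*e, a*d-c*f, a*e+b*f;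
         b*d+c*e, (1/2)*(-(a*a)+b*b+c*c+d*d+e*e-f*f), -(a*b)+e*f, -(a*c)-d*f;
         -(a*d)+c*f, -(a*b)+e*f, (1/2)*(a*a-b*b+c*c+d*d-e*e+f*f), -(b*c)+d*e;
         -(a*e)-b*f, -(a*c)-d*f, -(b*c)+d*e, (1/2)*(a*a+b*b-c*c-d*d+e*e+f*f)] : Mat4) * !![-(1/2)*(a*a+b*b+c*c+d*d+e*e+f*f), -(b*d)-c*e, a*d-c*f, a*e+b*f;
         b*d+c*e, (1/2)*(-(a*a)+b*b+c*c+d*d+e*e-f*f), -(a*b)+e*f, -(a*c)-d*f;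
         -(a*d)+c*f, -(a*b)+e*f, (1/2)*(a*a-b*b+c*c+d*d-e*e+f*f), -(b*c)+d*e;
         -(a*e)-b*f, -(a*c)-d*f, -(b*c)+d*e, (1/2)*(a*a+b*b-c*c-d*d+e*e+f*f)]).trace =
      (1/4) * ((((!![0,a,b,c;a,0,-d,-e;b,d,0,-f;c,e,f,0] : Mat4) * !![0,a,b,c;a,0,-d,-e;b,d,0,-f;c,e,f,0]).trace)^2
        + (((!![0,a,b,c;a,0,-d,-e;b,d,0,-f;c,e,f,0] : Mat4) * !![0,f,-e,d;f,0,c,-b;-e,-c,0,a;d,b,-a,0]).trace)^2) := by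
    rw [hQ]
    simp [Matrix.trace, Matrix.diag, Matrix.mul_apply, Fin.sum_univ_four,
      Matrix.smul_apply, Matrix.one_apply]
    ring
  refine ⟨?_, ?_, ?_, h4, ?_⟩
  · ext i j
    fin_cases i <;> fin_cases j <;>
      simp [Matrix.mul_apply, Fin.sum_univ_four, Matrix.trace, Matrix.diag,
        Matrix.one_apply] <;> ring
  · simp [Matrix.trace, Matrix.diag, Fin.sum_univ_four]
    ring
  · rw [hQ]
    ext i j
    fin_cases i <;> fin_cases j <;>
      simp [Matrix.smul_apply, Matrix.one_apply, Matrix.trace, Matrix.diag,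
        Fin.sum_univ_four] <;> ring
  · rw [h4]
    exact quarter_ne _ _

/-- Properties of the energy (Maxwell–Minkowski) tensor
`T = -(1/2)(F̂∘F̂ + (*F)̂∘(*F)̂)` of a 2-form `F`. -/
theorem stmt3 (F : Mat4) (hF : IsTwoForm F) (T : Mat4)
    (hT : T = (-(1/2) : ℝ) • (hat F * hat F + hat (hodge F) * hat (hodge F))) :
    T = -(hat F * hat F - ((1/4) * (hat F * hat F).trace) • (1 : Mat4)) ∧
    T.trace = 0 ∧
    (4 : ℝ) • (T * T) = (T * T).trace • (1 : Mat4) ∧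
    (T * T).trace =
      (1/4) * (((hat F * hat F).trace)^2 + ((hat F * hat (hodge F)).trace)^2) ∧
    ((T * T).trace ≠ 0 ↔
      ¬((hat F * hat F).trace = 0 ∧ (hat F * hat (hodge F)).trace = 0)) := by
  subst hT
  have hskew : ∀ i j : Fin 4, F j i = -F i j := by
    intro i j
    have := congrFun (congrFun hF i) j
    simpa [Matrix.transpose_apply] using this
  have hFe : F = !![0, F 0 1, F 0 2, F 0 3; -F 0 1, 0, F 1 2, F 1 3;
      -F 0 2, -F 1 2, 0, F 2 3; -F 0 3, -F 1 3, -F 2 3, 0] := by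
    ext i j
    fin_cases i <;> fin_cases j <;> simp <;>
      linarith [hskew 0 0, hskew 1 1, hskew 2 2, hskew 3 3, hskew 0 1, hskew 0 2,
        hskew 0 3, hskew 1 2, hskew 1 3, hskew 2 3]
  rw [hFe, hodge_explicit, hat_explicit, hat_explicit]
  exact key_lemma (F 0 1) (F 0 2) (F 0 3) (F 1 2) (F 1 3) (F 2 3) _ _ _
    (by ext i j; fin_cases i <;> fin_cases j <;> norm_num)
    (by ext i j; fin_cases i <;> fin_cases j <;> norm_num) rfl
end

section
/- Algebraic Rainich theorem (structure form): let T be an η-self-adjoint endomorphism of ℝ⁴ with tr T = 0, 4·(T∘T) = tr(T∘T)·id, tr(T∘T) ≠ 0, and η(Tx,x) > 0 for every timelike vector x. Then there exist a real number c > 0 and a 2-dimensional subspace V of ℝ⁴ on which η is nondegenerate of signature (−,+), such that T = −c·(π_V − π_{V⊥}), where π_V and π_{V⊥} are the η-orthogonal projections onto V and its η-orthogonal complement V⊥. -/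
open Matrix Real

/-- The η-orthogonal complement of a subspace of `ℝ⁴`. -/
def ηOrth (W : Submodule ℝ V4) : Submodule ℝ V4 where
  carrier := {z : V4 | ∀ w ∈ W, ηb z w = 0}
  add_mem' := by
    intro a b ha hb w hw
    simp only [ηb, Set.mem_setOf_eq] at *
    rw [add_dotProduct, ha w hw, hb w hw, add_zero]
  zero_mem' := by
    intro w hw
    simp [ηb]
  smul_mem' := by
    intro c a ha w hw
    simp only [ηb, Set.mem_setOf_eq] at *
    rw [smul_dotProduct, ha w hw, smul_zero]

lemma etab_eq (x y : V4) : ηb x y = -(x 0 * y 0) + x 1 * y 1 + x 2 * y 2 + x 3 * y 3 := by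
  simp [ηb, ηm, Matrix.mulVec, dotProduct, Fin.sum_univ_four, Matrix.diagonal_apply]

lemma trace_mulVecLin (M : Mat4) : LinearMap.trace ℝ V4 M.mulVecLin = M.trace := by
  rw [LinearMap.trace_eq_matrix_trace ℝ (Pi.basisFun ℝ (Fin 4)), LinearMap.toMatrix_eq_toMatrix']
  exact congrArg Matrix.trace (LinearMap.toMatrix'_toLin' M)

lemma quad_nonneg {a b c : ℝ} (h : ∀ t : ℝ, 0 < t → 0 < a + b * t + c * t ^ 2) : 0 ≤ a := by
  by_contra hc0
  push_neg at hc0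
  have hbc : (0:ℝ) < |b| + |c| + 1 := by positivity
  set t := min 1 (-a / (|b| + |c| + 1)) with ht
  have htpos : 0 < t := lt_min one_pos (div_pos (by linarith) hbc)
  have ht1 : t ≤ 1 := min_le_left _ _
  have ht2 : t * (|b| + |c| + 1) ≤ -a := by
    have := min_le_right 1 (-a / (|b| + |c| + 1))
    calc t * (|b| + |c| + 1) ≤ (-a / (|b| + |c| + 1)) * (|b| + |c| + 1) := by
          apply mul_le_mul_of_nonneg_right _ (le_of_lt hbc); rw [ht]; exact this
      _ = -a := by field_simp
  have h1 := h t htpos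
  have hb : b * t ≤ |b| * t := mul_le_mul_of_nonneg_right (le_abs_self b) (le_of_lt htpos)
  have htt : t ^ 2 ≤ t := by nlinarith
  have hc2 : c * t ^ 2 ≤ |c| * t :=
    le_trans (mul_le_mul_of_nonneg_right (le_abs_self c) (sq_nonneg t))
      (mul_le_mul_of_nonneg_left htt (abs_nonneg c))
  nlinarith

lemma orth_timelike {x y : V4} (hx : ηb x x < 0) (hxy : ηb x y = 0) (hy : ηb y y ≤ 0) : y = 0 := by
  rw [etab_eq] at hx hxy hy
  have hx0 : x 1 * x 1 + x 2 * x 2 + x 3 * x 3 < x 0 ^ 2 := by nlinarith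
  have hle : y 1 ^ 2 + y 2 ^ 2 + y 3 ^ 2 ≤ 0 := by
    by_contra hpos
    push_neg at hpos
    have cs : (x 1 * y 1 + x 2 * y 2 + x 3 * y 3) ^ 2 ≤
        (x 1 * x 1 + x 2 * x 2 + x 3 * x 3) * (y 1 ^ 2 + y 2 ^ 2 + y 3 ^ 2) := by
      nlinarith [sq_nonneg (x 1 * y 2 - x 2 * y 1), sq_nonneg (x 1 * y 3 - x 3 * y 1),
        sq_nonneg (x 2 * y 3 - x 3 * y 2)]
    have hxy' : (x 1 * y 1 + x 2 * y 2 + x 3 * y 3) ^ 2 = x 0 ^ 2 * y 0 ^ 2 := by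
      have : x 0 * y 0 = x 1 * y 1 + x 2 * y 2 + x 3 * y 3 := by linarith
      rw [← this]; ring
    have h2 : (x 1 * x 1 + x 2 * x 2 + x 3 * x 3) * (y 1 ^ 2 + y 2 ^ 2 + y 3 ^ 2) <
        x 0 ^ 2 * (y 1 ^ 2 + y 2 ^ 2 + y 3 ^ 2) := mul_lt_mul_of_pos_right hx0 hpos
    have h3 : x 0 ^ 2 * (y 1 ^ 2 + y 2 ^ 2 + y 3 ^ 2) ≤ x 0 ^ 2 * (y 0 ^ 2) := by
      apply mul_le_mul_of_nonneg_left _ (sq_nonneg (x 0)); nlinarith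
    linarith
  have hy1 : y 1 = 0 := by nlinarith [sq_nonneg (y 1), sq_nonneg (y 2), sq_nonneg (y 3)]
  have hy2 : y 2 = 0 := by nlinarith [sq_nonneg (y 1), sq_nonneg (y 2), sq_nonneg (y 3)]
  have hy3 : y 3 = 0 := by nlinarith [sq_nonneg (y 1), sq_nonneg (y 2), sq_nonneg (y 3)]
  have hx00 : x 0 ≠ 0 := by intro h; rw [h] at hx0; nlinarith [sq_nonneg (x 1)]
  have hy0 : y 0 = 0 := by
    rw [hy1, hy2, hy3] at hxy
    have : x 0 * y 0 = 0 := by linarith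
    rcases mul_eq_zero.mp this with h | h
    · exact absurd h hx00
    · exact h
  funext i
  fin_cases i <;> simp only [Pi.zero_apply] <;> assumption

lemma etab_symm (x y : V4) : ηb x y = ηb y x := by rw [etab_eq, etab_eq]; ring

lemma etab_smul_left (a : ℝ) (x y : V4) : ηb (a • x) y = a * ηb x y := by
  simp only [etab_eq, Pi.smul_apply, smul_eq_mul]; ring

lemma etab_smul_right (a : ℝ) (x y : V4) : ηb x (a • y) = a * ηb x y := by
  simp only [etab_eq, Pi.smul_apply, smul_eq_mul]; ring

lemma etab_add_left (x y z : V4) : ηb (x + y) z = ηb x z + ηb y z := by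
  simp only [etab_eq, Pi.add_apply]; ring

lemma etab_add_right (x y z : V4) : ηb x (y + z) = ηb x y + ηb x z := by
  simp only [etab_eq, Pi.add_apply]; ring

lemma etab_sub_left (x y z : V4) : ηb (x - y) z = ηb x z - ηb y z := by
  simp only [etab_eq, Pi.sub_apply]; ring

lemma etab_neg_left (x y : V4) : ηb (-x) y = -ηb x y := by
  simp only [etab_eq, Pi.neg_apply]; ring

lemma etab_neg_right (x y : V4) : ηb x (-y) = -ηb x y := by
  simp only [etab_eq, Pi.neg_apply]; ring

noncomputable def ee : V4 := ![1, 0, 0, 0]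

lemma ee_time : ηb ee ee = -1 := by simp [etab_eq, ee]


lemma mem_etaOrth {W : Submodule ℝ V4} {z : V4} (h : ∀ w ∈ W, ηb z w = 0) : z ∈ ηOrth W := h


set_option maxHeartbeats 2000000 in
/-- Algebraic Rainich theorem (structure form): a trace-free η-self-adjoint
endomorphism whose square is a nonzero multiple of the identity and which
satisfies the energy condition is `-c(π_V - π_{V⊥})` for some `c > 0` and some
timelike 2-plane `V`. -/
theorem stmt7 (T : Mat4) (hsa : SelfAdj T) (h0 : T.trace = 0)
    (hsq : (4 : ℝ) • (T * T) = (T * T).trace • (1 : Mat4))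
    (hne : (T * T).trace ≠ 0)
    (hen : ∀ x : V4, Timelike x → 0 < ηb (T *ᵥ x) x) :
    ∃ c : ℝ, 0 < c ∧ ∃ V : Submodule ℝ V4, Module.finrank ℝ V = 2 ∧
      (∃ x ∈ V, ∃ y ∈ V, ηb x x = -1 ∧ ηb y y = 1 ∧ ηb x y = 0) ∧
      ∃ p q : V4 →ₗ[ℝ] V4,
        (∀ z, p z ∈ V) ∧ (∀ z, z - p z ∈ ηOrth V) ∧
        (∀ z, q z ∈ ηOrth V) ∧ (∀ z, z - q z ∈ V) ∧
        ∀ z, T *ᵥ z = -c • (p z - q z) := by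
  set μ : ℝ := (T * T).trace with hmu
  have hTT : T * T = (μ / 4) • 1 := by
    calc T * T = (4:ℝ)⁻¹ • ((4:ℝ) • (T * T)) := by rw [smul_smul]; norm_num
      _ = (4:ℝ)⁻¹ • (μ • (1:Mat4)) := by rw [hsq]
      _ = (μ / 4) • 1 := by rw [smul_smul]; congr 1; ring
  have key : ∀ z : V4, T *ᵥ (T *ᵥ z) = (μ / 4) • z := by
    intro z
    rw [Matrix.mulVec_mulVec, hTT, Matrix.smul_mulVec, Matrix.one_mulVec]
  have hen' : ∀ x : V4, ηb x x < 0 → 0 < ηb (T *ᵥ x) x := fun x hx => hen x hx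
  rcases lt_trichotomy μ 0 with hμ | hμ | hμ
  · exfalso
    -- step 1: nonneg on the null cone (positive time component case)
    have pos_case : ∀ y : V4, ηb y y = 0 → 0 < y 0 → 0 ≤ ηb (T *ᵥ y) y := by
      intro y hy hy0
      have expand : ∀ t : ℝ, ηb (T *ᵥ (y + t • ee)) (y + t • ee) =
          ηb (T *ᵥ y) y + (ηb (T *ᵥ y) ee + ηb (T *ᵥ ee) y) * t + ηb (T *ᵥ ee) ee * t ^ 2 := by
        intro t
        rw [Matrix.mulVec_add, Matrix.mulVec_smul]
        simp only [etab_eq, Pi.add_apply, Pi.smul_apply, smul_eq_mul]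
        ring
      apply quad_nonneg (b := ηb (T *ᵥ y) ee + ηb (T *ᵥ ee) y) (c := ηb (T *ᵥ ee) ee)
      intro t ht
      rw [← expand t]
      apply hen'
      have : ηb (y + t • ee) (y + t • ee) = ηb y y + 2 * t * ηb y ee + t ^ 2 * ηb ee ee := by
        simp only [etab_eq, Pi.add_apply, Pi.smul_apply, smul_eq_mul]; ring
      rw [this, hy, ee_time]
      have : ηb y ee = -(y 0) := by simp [etab_eq, ee]
      rw [this]
      nlinarith
    have nonneg : ∀ y : V4, ηb y y = 0 → 0 ≤ ηb (T *ᵥ y) y := by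
      intro y hy
      rcases lt_trichotomy (y 0) 0 with h | h | h
      · have h1 : ηb (-y) (-y) = 0 := by rw [etab_neg_left, etab_neg_right, hy]; ring
        have h2 : (0:ℝ) < (-y) 0 := by simp only [Pi.neg_apply]; linarith
        have h3 := pos_case (-y) h1 h2
        rw [Matrix.mulVec_neg, etab_neg_left, etab_neg_right] at h3
        linarith
      · have hy' : y = 0 := by
          rw [etab_eq] at hy
          have h1 : y 1 = 0 := by nlinarith [sq_nonneg (y 1), sq_nonneg (y 2), sq_nonneg (y 3)]
          have h2 : y 2 = 0 := by nlinarith [sq_nonneg (y 1), sq_nonneg (y 2), sq_nonneg (y 3)]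
          have h3 : y 3 = 0 := by nlinarith [sq_nonneg (y 1), sq_nonneg (y 2), sq_nonneg (y 3)]
          funext i; fin_cases i <;> simp only [Pi.zero_apply] <;> assumption
        rw [hy', Matrix.mulVec_zero]
        simp [etab_eq]
      · exact pos_case y hy h
    -- step 2: η(Tx,x) = 0 on the null cone
    have nullz : ∀ x : V4, ηb x x = 0 → ηb (T *ᵥ x) x = 0 := by
      intro x hx
      have h1 := nonneg x hx
      have hTx : ηb (T *ᵥ x) (T *ᵥ x) = 0 := by
        rw [hsa, key, etab_smul_right, hx]; ring
      have h2 := nonneg (T *ᵥ x) hTx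
      rw [key, etab_smul_left, etab_symm] at h2
      nlinarith
    -- step 3: many null vectors
    have q1 := nullz ![1, 1, 0, 0] (by simp [etab_eq])
    have q2 := nullz ![1, -1, 0, 0] (by simp [etab_eq])
    have q3 := nullz ![1, 0, 1, 0] (by simp [etab_eq])
    have q4 := nullz ![1, 0, -1, 0] (by simp [etab_eq])
    have q5 := nullz ![1, 0, 0, 1] (by simp [etab_eq])
    have q6 := nullz ![1, 0, 0, -1] (by simp [etab_eq])
    have q7 := nullz ![5, 4, 3, 0] (by simp [etab_eq]; norm_num)
    have q8 := nullz ![5, 4, 0, 3] (by simp [etab_eq]; norm_num)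
    have q9 := nullz ![5, 0, 4, 3] (by simp [etab_eq]; norm_num)
    simp only [etab_eq, Matrix.mulVec, dotProduct, Fin.sum_univ_four,
      Matrix.cons_val_zero, Matrix.cons_val_one, Matrix.head_cons, Matrix.cons_val_two,
      Matrix.tail_cons, Matrix.cons_val_three, Matrix.head_fin_const, mul_one, mul_zero,
      mul_neg, add_zero, zero_add, neg_neg, one_mul, neg_zero] at q1 q2 q3 q4 q5 q6 q7 q8 q9
    -- symmetry relations
    have s01 := hsa ![1,0,0,0] ![0,1,0,0]
    have s02 := hsa ![1,0,0,0] ![0,0,1,0]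
    have s03 := hsa ![1,0,0,0] ![0,0,0,1]
    have s12 := hsa ![0,1,0,0] ![0,0,1,0]
    have s13 := hsa ![0,1,0,0] ![0,0,0,1]
    have s23 := hsa ![0,0,1,0] ![0,0,0,1]
    simp only [etab_eq, Matrix.mulVec, dotProduct, Fin.sum_univ_four,
      Matrix.cons_val_zero, Matrix.cons_val_one, Matrix.head_cons, Matrix.cons_val_two,
      Matrix.tail_cons, Matrix.cons_val_three, mul_one, mul_zero,
      mul_neg, add_zero, zero_add, neg_neg, one_mul, neg_zero, zero_mul] at s01 s02 s03 s12 s13 s23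
    have htr : T 0 0 + T 1 1 + T 2 2 + T 3 3 = 0 := by
      simpa [Matrix.trace, Fin.sum_univ_four, Matrix.diag] using h0
    have z00 : T 0 0 = 0 := by linarith
    have z11 : T 1 1 = 0 := by linarith
    have z22 : T 2 2 = 0 := by linarith
    have z33 : T 3 3 = 0 := by linarith
    have z01 : T 0 1 = 0 := by linarith
    have z10 : T 1 0 = 0 := by linarith
    have z02 : T 0 2 = 0 := by linarith
    have z20 : T 2 0 = 0 := by linarith
    have z03 : T 0 3 = 0 := by linarith
    have z30 : T 3 0 = 0 := by linarith
    have z12 : T 1 2 = 0 := by linarith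
    have z21 : T 2 1 = 0 := by linarith
    have z13 : T 1 3 = 0 := by linarith
    have z31 : T 3 1 = 0 := by linarith
    have z23 : T 2 3 = 0 := by linarith
    have z32 : T 3 2 = 0 := by linarith
    have hT0 : T = 0 := by
      ext i j
      fin_cases i <;> fin_cases j <;> simp only [Matrix.zero_apply] <;> assumption
    exact hne (by rw [hmu, hT0]; simp)
  · exact absurd hμ hne
  set c : ℝ := Real.sqrt μ / 2 with hcdef
  have hc : 0 < c := by positivity
  have hc0 : c ≠ 0 := ne_of_gt hc
  have hc2 : μ / 4 = c ^ 2 := by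
    rw [hcdef]
    rw [div_pow, sq_sqrt (le_of_lt hμ)]
    norm_num
  set p : V4 →ₗ[ℝ] V4 := (2 * c)⁻¹ • (c • LinearMap.id - Matrix.mulVecLin T) with hpdef
  set q : V4 →ₗ[ℝ] V4 := (2 * c)⁻¹ • (c • LinearMap.id + Matrix.mulVecLin T) with hqdef
  have hp : ∀ z, p z = (2 * c)⁻¹ • (c • z - T *ᵥ z) := fun z => rfl
  have hq : ∀ z, q z = (2 * c)⁻¹ • (c • z + T *ᵥ z) := fun z => rfl
  have hpq : ∀ z, p z + q z = z := by
    intro z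
    rw [hp, hq]
    funext i
    simp only [Pi.smul_apply, Pi.sub_apply, Pi.add_apply, smul_eq_mul]
    field_simp
    ring
  have hTp : ∀ z, T *ᵥ p z = -c • p z := by
    intro z
    rw [hp, Matrix.mulVec_smul, Matrix.mulVec_sub, Matrix.mulVec_smul, key, hc2]
    funext i
    simp only [Pi.smul_apply, Pi.sub_apply, smul_eq_mul]
    ring
  have hTq : ∀ z, T *ᵥ q z = c • q z := by
    intro z
    rw [hq, Matrix.mulVec_smul, Matrix.mulVec_add, Matrix.mulVec_smul, key, hc2]
    funext i
    simp only [Pi.smul_apply, Pi.add_apply, smul_eq_mul]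
    ring
  have hpp : ∀ z, p (p z) = p z := by
    intro z
    conv_lhs => rw [hp (p z)]
    rw [hTp z]
    funext i
    simp only [Pi.smul_apply, Pi.sub_apply, Pi.neg_apply, smul_eq_mul, neg_mul]
    field_simp
    ring
  have horth : ∀ w z, ηb (p w) (q z) = 0 := by
    intro w z
    have h1 := hsa (p w) (q z)
    rw [hTp, hTq, etab_smul_left, etab_smul_right, neg_mul] at h1
    have h2 : c * ηb (p w) (q z) = 0 := by linarith
    exact (mul_eq_zero.mp h2).resolve_left hc0
  have hTz : ∀ z, T *ᵥ z = c • q z - c • p z := by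
    intro z
    calc T *ᵥ z = T *ᵥ (p z + q z) := by rw [hpq]
      _ = T *ᵥ p z + T *ᵥ q z := by rw [Matrix.mulVec_add]
      _ = c • q z - c • p z := by
          rw [hTp, hTq]; funext i
          simp only [Pi.add_apply, Pi.sub_apply, Pi.smul_apply, smul_eq_mul]; ring
  have hsplit : ∀ z, ηb (T *ᵥ z) z = c * (ηb (q z) (q z) - ηb (p z) (p z)) := by
    intro z
    have hz : ∀ u : V4, ηb u z = ηb u (p z) + ηb u (q z) := by
      intro u
      rw [← etab_add_right, hpq]
    rw [hTz, etab_sub_left, etab_smul_left, etab_smul_left, hz, hz,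
      horth z z, etab_symm (q z) (p z), horth z z]
    ring
  have hnorm : ∀ z, ηb z z = ηb (p z) (p z) + ηb (q z) (q z) := by
    intro z
    have hz : ∀ u : V4, ηb u z = ηb u (p z) + ηb u (q z) := by
      intro u
      rw [← etab_add_right, hpq]
    calc ηb z z = ηb (p z) z + ηb (q z) z := by rw [← etab_add_left, hpq]
      _ = _ := by rw [hz, hz, horth z z, etab_symm (q z) (p z), horth z z]; ring
  -- the subspace
  set V : Submodule ℝ V4 := LinearMap.range p with hVdef
  have hmem : ∀ z, p z ∈ V := fun z => LinearMap.mem_range_self p z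
  -- rank
  have hproj : LinearMap.IsProj V p :=
    ⟨hmem, by rintro x ⟨z, rfl⟩; exact hpp z⟩
  have htrace : LinearMap.trace ℝ V4 p = 2 := by
    rw [hpdef]
    rw [_root_.map_smul, map_sub, _root_.map_smul, trace_mulVecLin, h0, LinearMap.trace_id]
    have h4 : (Module.finrank ℝ V4 : ℝ) = 4 := by
      norm_num [Module.finrank_pi]
    rw [h4]
    simp only [smul_eq_mul]
    field_simp
    ring
  have hrank : Module.finrank ℝ V = 2 := by
    have := hproj.trace
    rw [htrace] at this
    exact_mod_cast this.symm
  -- timelike vector in V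
  have hee := hen' ee (by rw [ee_time]; norm_num)
  rw [hsplit] at hee
  have hd : 0 < ηb (q ee) (q ee) - ηb (p ee) (p ee) := by
    by_contra h
    push_neg at h
    nlinarith [mul_nonneg (le_of_lt hc) (neg_nonneg.mpr h)]
  have ha : ηb (p ee) (p ee) < 0 := by
    have hn := hnorm ee
    rw [ee_time] at hn
    linarith
  -- normalize x
  set x0 : V4 := p ee with hx0def
  set a : ℝ := ηb x0 x0 with hadef
  set s : ℝ := Real.sqrt (-a) with hsdef
  have hs : s ^ 2 = -a := Real.sq_sqrt (by linarith)
  have hspos : 0 < s := Real.sqrt_pos.mpr (by linarith)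
  set x : V4 := s⁻¹ • x0 with hxdef
  have hxV : x ∈ V := Submodule.smul_mem V _ (hmem ee)
  have hxx : ηb x x = -1 := by
    rw [hxdef, etab_smul_left, etab_smul_right, ← hadef]
    field_simp
    nlinarith
  -- second vector
  have hxne : ∃ v, v ∈ V ∧ v ∉ Submodule.span ℝ {x} := by
    by_contra h
    push_neg at h
    have hle : V ≤ Submodule.span ℝ {x} := h
    have h1 := Submodule.finrank_mono hle
    have hx0' : x ≠ 0 := by
      intro hz
      rw [hz] at hxx
      simp [etab_eq] at hxx
    rw [finrank_span_singleton hx0', hrank] at h1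
    omega
  obtain ⟨v, hvV, hvs⟩ := hxne
  set y0 : V4 := v + (ηb v x) • x with hy0def
  have hy0x : ηb x y0 = 0 := by
    rw [hy0def, etab_add_right, etab_smul_right, hxx, etab_symm x v]
    ring
  have hy0ne : y0 ≠ 0 := by
    intro h
    apply hvs
    have : v = -(ηb v x) • x := by
      have := h
      rw [hy0def] at this
      funext i
      have hi := congrFun this i
      simp only [Pi.add_apply, Pi.smul_apply, Pi.zero_apply, smul_eq_mul, Pi.neg_apply,
        neg_smul] at hi ⊢
      linarith
    exact Submodule.mem_span_singleton.mpr ⟨-(ηb v x), this.symm⟩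
  have hy0pos : 0 < ηb y0 y0 := by
    rcases lt_or_ge 0 (ηb y0 y0) with h | h
    · exact h
    · exact absurd (orth_timelike (by rw [hxx]; norm_num) hy0x h) hy0ne
  set sy : ℝ := Real.sqrt (ηb y0 y0) with hsydef
  have hsy : sy ^ 2 = ηb y0 y0 := Real.sq_sqrt (le_of_lt hy0pos)
  have hsypos : 0 < sy := Real.sqrt_pos.mpr hy0pos
  set y : V4 := sy⁻¹ • y0 with hydef
  have hyV : y ∈ V := by
    rw [hydef, hy0def]
    exact Submodule.smul_mem V _ (Submodule.add_mem V hvV (Submodule.smul_mem V _ hxV))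
  have hyy : ηb y y = 1 := by
    rw [hydef, etab_smul_left, etab_smul_right]
    rw [← hsy]
    field_simp
  have hxy : ηb x y = 0 := by
    rw [hydef, etab_smul_right, hy0x, mul_zero]
  refine ⟨c, hc, V, hrank, ⟨x, hxV, y, hyV, hxx, hyy, hxy⟩, p, q, hmem, ?_, ?_, ?_, ?_⟩
  · intro z
    have hzq : z - p z = q z := (eq_sub_of_add_eq' (hpq z)).symm
    rw [hzq]
    refine mem_etaOrth ?_
    rintro w ⟨u, rfl⟩
    rw [etab_symm]
    exact horth u z
  · intro z
    refine mem_etaOrth ?_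
    rintro w ⟨u, rfl⟩
    rw [etab_symm]
    exact horth u z
  · intro z
    have hzp : z - q z = p z := (eq_sub_of_add_eq (hpq z)).symm
    rw [hzp]
    exact hmem z
  · intro z
    rw [hTz z]
    funext i
    simp only [Pi.sub_apply, Pi.smul_apply, smul_eq_mul, LinearMap.sub_apply]
    ring
end

section
/- Explicit formula for the Rainich index of the square of a regular skew-symmetric tensor: let U be a unitary 2-form on ℝ⁴, φ ∈ ℝ, ψ ∈ (0, π/2), A := e^φ·(cos ψ · U + sin ψ · (*U)), and K := Â∘Â. Set a := tr K and b := tr(K∘K). Then a = 2e^{2φ}·cos 2ψ, b = e^{4φ}·(1 + cos²2ψ), 4b − a² = 4e^{4φ} > 0, 2(2b − a²) = (2e^{2φ}·sin 2ψ)² > 0, and ψ = arctan[ (√(4b − a²) − a) / √(2(2b − a²)) ]. -/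
open Matrix Real

noncomputable def sk (a b c d e f : ℝ) : Mat4 :=
  !![0,a,b,c; -a,0,d,e; -b,-d,0,f; -c,-e,-f,0]


set_option maxHeartbeats 4000000 in
lemma hodge_sk (a b c d e f : ℝ) :
    hodge (sk a b c d e f) = sk f (-e) d (-c) b (-a) := by
  ext i j
  fin_cases i <;> fin_cases j <;>
  · simp [hodge, sk, lc, ηm, Matrix.diagonal, Fin.sum_univ_four]
    try norm_num [show ((3:Fin 4):ℕ) = 3 from rfl]
    try ring

lemma sk_transpose (a b c d e f : ℝ) :
    (sk a b c d e f)ᵀ = sk (-a) (-b) (-c) (-d) (-e) (-f) := by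
  ext i j
  fin_cases i <;> fin_cases j <;> simp [sk, Matrix.transpose_apply]

set_option maxHeartbeats 2000000 in
lemma hat_sk (a b c d e f : ℝ) :
    hat (sk a b c d e f) = !![0,a,b,c; a,0,-d,-e; b,d,0,-f; c,e,f,0] := by
  rw [hat, sk_transpose]
  ext i j
  fin_cases i <;> fin_cases j <;>
    simp [sk, ηm, Matrix.diagonal, Matrix.mul_apply, Fin.sum_univ_four]

lemma eta4 (M : Mat4) : M = !![M 0 0, M 0 1, M 0 2, M 0 3; M 1 0, M 1 1, M 1 2, M 1 3;
    M 2 0, M 2 1, M 2 2, M 2 3; M 3 0, M 3 1, M 3 2, M 3 3] := by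
  ext i j; fin_cases i <;> fin_cases j <;> simp

lemma trUU (a b c d e f : ℝ) :
    (hat (sk a b c d e f) * hat (sk a b c d e f)).trace
      = 2*(a^2+b^2+c^2-d^2-e^2-f^2) := by
  rw [hat_sk]
  simp [Matrix.trace, Matrix.diag, Matrix.mul_apply, Fin.sum_univ_four]
  ring

lemma trUW (a b c d e f : ℝ) :
    (hat (sk a b c d e f) * hat (sk f (-e) d (-c) b (-a))).trace
      = 4*(a*f - b*e + c*d) := by
  rw [hat_sk, hat_sk]
  simp [Matrix.trace, Matrix.diag, Matrix.mul_apply, Fin.sum_univ_four]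
  ring

set_option maxHeartbeats 2000000 in
lemma mulUW (a b c d e f : ℝ) (h2 : a*f - b*e + c*d = 0) :
    hat (sk a b c d e f) * hat (sk f (-e) d (-c) b (-a)) = 0 := by
  rw [hat_sk, hat_sk]
  ext i j
  fin_cases i <;> fin_cases j <;>
  · simp [Matrix.mul_apply, Fin.sum_univ_four]
    first | ring1 | linear_combination h2 | linear_combination -h2

set_option maxHeartbeats 2000000 in
lemma mulWU (a b c d e f : ℝ) (h2 : a*f - b*e + c*d = 0) :
    hat (sk f (-e) d (-c) b (-a)) * hat (sk a b c d e f) = 0 := by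
  rw [hat_sk, hat_sk]
  ext i j
  fin_cases i <;> fin_cases j <;>
  · simp [Matrix.mul_apply, Fin.sum_univ_four]
    first | ring1 | linear_combination h2 | linear_combination -h2

set_option maxHeartbeats 2000000 in
lemma mulWW (a b c d e f : ℝ) (h1 : a^2+b^2+c^2-d^2-e^2-f^2 = 1) :
    hat (sk f (-e) d (-c) b (-a)) * hat (sk f (-e) d (-c) b (-a))
      = hat (sk a b c d e f) * hat (sk a b c d e f) - 1 := by
  rw [hat_sk, hat_sk]
  ext i j
  fin_cases i <;> fin_cases j <;>
  · simp [Matrix.mul_apply, Fin.sum_univ_four, Matrix.sub_apply, Matrix.one_apply]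
    first | ring1 | linear_combination h1 | linear_combination -h1

set_option maxHeartbeats 2000000 in
/-- Explicit formula for the Rainich index of the square of a regular
skew-symmetric tensor `A = e^φ(cos ψ · U + sin ψ · *U)`. -/
theorem stmt10 (U : Mat4) (hU : IsUnitary U) (φ ψ : ℝ)
    (hψ0 : 0 < ψ) (hψ1 : ψ < π/2) (A K : Mat4)
    (hA : A = Real.exp φ • (Real.cos ψ • U + Real.sin ψ • hodge U))
    (hK : K = hat A * hat A)
    (a b : ℝ) (ha : a = K.trace) (hb : b = (K * K).trace) :
    a = 2 * Real.exp (2*φ) * Real.cos (2*ψ) ∧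
    b = Real.exp (4*φ) * (1 + (Real.cos (2*ψ))^2) ∧
    4*b - a^2 = 4 * Real.exp (4*φ) ∧ 0 < 4*b - a^2 ∧
    2*(2*b - a^2) = (2 * Real.exp (2*φ) * Real.sin (2*ψ))^2 ∧
    0 < 2*(2*b - a^2) ∧
    ψ = Real.arctan ((Real.sqrt (4*b - a^2) - a) / Real.sqrt (2*(2*b - a^2))) := by
  obtain ⟨hskew, ht1, ht2⟩ := hU
  have hsym : ∀ i j : Fin 4, U j i = -U i j := by
    intro i j
    have := congrFun (congrFun hskew i) j
    simpa [Matrix.transpose_apply] using this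
  have hdiag : ∀ i : Fin 4, U i i = 0 := fun i => by have := hsym i i; linarith
  have hUsk : U = sk (U 0 1) (U 0 2) (U 0 3) (U 1 2) (U 1 3) (U 2 3) := by
    ext i j
    fin_cases i <;> fin_cases j <;>
    · simp [sk]
      try first | exact hdiag _ | exact hsym _ _
  obtain ⟨p, q, r, s, t, u, rfl⟩ : ∃ p q r s t u, U = sk p q r s t u :=
    ⟨_, _, _, _, _, _, hUsk⟩
  rw [hodge_sk] at ht2 hA
  have h1 : p^2+q^2+r^2-s^2-t^2-u^2 = 1 := by
    have := trUU p q r s t u; linarith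
  have h2 : p*u - q*t + r*s = 0 := by
    have := trUW p q r s t u; linarith
  have hUW := mulUW p q r s t u h2
  have hWU := mulWU p q r s t u h2
  have hWW := mulWW p q r s t u h1
  have hatA : hat A = Real.exp φ • (Real.cos ψ • hat (sk p q r s t u)
      + Real.sin ψ • hat (sk u (-t) s (-r) q (-p))) := by
    rw [hA]
    simp only [hat, Matrix.transpose_smul, Matrix.transpose_add, Matrix.mul_smul, Matrix.mul_add]
  have hpyth := Real.sin_sq_add_cos_sq ψ
  have hK2 : K = (Real.exp φ)^2 • (hat (sk p q r s t u) * hat (sk p q r s t u)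
      - (Real.sin ψ)^2 • (1 : Mat4)) := by
    rw [hK, hatA]
    simp only [Matrix.smul_mul, Matrix.mul_smul, Matrix.add_mul, Matrix.mul_add, hUW, hWU, hWW,
      smul_zero, add_zero, zero_add, smul_smul, smul_sub, smul_add]
    match_scalars <;>
      first
        | linear_combination (Real.exp φ)^2 * hpyth
        | linear_combination (-(Real.exp φ)^2) * hpyth
        | ring1
  have hE2 : Real.exp (2*φ) = (Real.exp φ)^2 := by rw [two_mul, Real.exp_add, sq]
  have hE4 : Real.exp (4*φ) = (Real.exp (2*φ))^2 := by
    rw [show (4:ℝ)*φ = 2*φ + 2*φ by ring, Real.exp_add, sq]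
  have hE4' : Real.exp (4*φ) = (Real.exp φ)^4 := by rw [hE4, hE2]; ring
  have haval : a = (Real.exp φ)^2 * (2 - 4*(Real.sin ψ)^2) := by
    rw [ha, hK2]
    simp [Matrix.trace_smul, Matrix.trace_sub, Matrix.trace_one, ht1, smul_eq_mul]
    try ring
  have hMM : hat (sk p q r s t u) * hat (sk p q r s t u)
      = hat (sk u (-t) s (-r) q (-p)) * hat (sk u (-t) s (-r) q (-p)) + 1 := by
    rw [hWW]; abel
  have hMMNN : (hat (sk p q r s t u) * hat (sk p q r s t u))
      * (hat (sk u (-t) s (-r) q (-p)) * hat (sk u (-t) s (-r) q (-p))) = 0 := by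
    calc (hat (sk p q r s t u) * hat (sk p q r s t u))
        * (hat (sk u (-t) s (-r) q (-p)) * hat (sk u (-t) s (-r) q (-p)))
        = hat (sk p q r s t u) * ((hat (sk p q r s t u) * hat (sk u (-t) s (-r) q (-p)))
            * hat (sk u (-t) s (-r) q (-p))) := by
          rw [Matrix.mul_assoc, Matrix.mul_assoc]
      _ = 0 := by rw [hUW, Matrix.zero_mul, Matrix.mul_zero]
  have hMM4 : (hat (sk p q r s t u) * hat (sk p q r s t u))
      * (hat (sk p q r s t u) * hat (sk p q r s t u))
      = hat (sk p q r s t u) * hat (sk p q r s t u) := by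
    conv_lhs => rw [show hat (sk p q r s t u) * hat (sk p q r s t u)
      = hat (sk u (-t) s (-r) q (-p)) * hat (sk u (-t) s (-r) q (-p)) + 1 from hMM]
    rw [Matrix.mul_add, Matrix.mul_one, ← hMM, hMMNN, zero_add]
  have hbval : b = (Real.exp φ)^4 * (2 - 4*(Real.sin ψ)^2 + 4*(Real.sin ψ)^4) := by
    rw [hb, hK2]
    simp only [Matrix.smul_mul, Matrix.mul_smul, Matrix.sub_mul, Matrix.mul_sub, Matrix.mul_one,
      Matrix.one_mul, smul_smul, smul_sub, hMM4]
    simp [Matrix.trace_smul, Matrix.trace_sub, Matrix.trace_one, ht1, smul_eq_mul]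
    try ring
  have hS2 : 0 < Real.sin (2*ψ) := by
    apply Real.sin_pos_of_pos_of_lt_pi (by linarith)
    have := Real.pi_pos; linarith
  have hcos : 0 < Real.cos ψ := Real.cos_pos_of_mem_Ioo ⟨by linarith [Real.pi_pos], hψ1⟩
  have hsin : 0 < Real.sin ψ := by
    apply Real.sin_pos_of_pos_of_lt_pi hψ0
    have := Real.pi_pos; linarith
  have hx : (0:ℝ) < Real.exp (2*φ) := Real.exp_pos _
  have hpyth2 := Real.sin_sq_add_cos_sq (2*ψ)
  have i1 : a = 2 * Real.exp (2*φ) * Real.cos (2*ψ) := by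
    rw [haval, Real.cos_two_mul, hE2]
    linear_combination (-4*(Real.exp φ)^2) * hpyth
  have i2 : b = Real.exp (4*φ) * (1 + (Real.cos (2*ψ))^2) := by
    rw [hbval, Real.cos_two_mul, hE4']
    linear_combination (-4*(Real.exp φ)^4*((Real.cos ψ)^2-(Real.sin ψ)^2)) * hpyth
  have i3 : 4*b - a^2 = 4 * Real.exp (4*φ) := by
    rw [i1, i2, hE4]
    ring
  have i5 : 2*(2*b - a^2) = (2 * Real.exp (2*φ) * Real.sin (2*ψ))^2 := by
    rw [i1, i2, hE4]
    first
      | linear_combination (4*(Real.exp (2*φ))^2) * hpyth2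
      | linear_combination (-4*(Real.exp (2*φ))^2) * hpyth2
  have i4 : 0 < 4*b - a^2 := by rw [i3]; positivity
  have hpos : 0 < 2 * Real.exp (2*φ) * Real.sin (2*ψ) := by positivity
  have i6 : 0 < 2*(2*b - a^2) := by rw [i5]; positivity
  refine ⟨i1, i2, i3, i4, i5, i6, ?_⟩
  have hs1 : Real.sqrt (4*b - a^2) = 2 * Real.exp (2*φ) := by
    rw [i3, hE4, show (4:ℝ) * (Real.exp (2*φ))^2 = (2*Real.exp (2*φ))^2 by ring]
    exact Real.sqrt_sq (by positivity)
  have hs2 : Real.sqrt (2*(2*b - a^2)) = 2 * Real.exp (2*φ) * Real.sin (2*ψ) := by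
    rw [i5]
    exact Real.sqrt_sq (le_of_lt hpos)
  rw [hs1, hs2, i1]
  have harg : (2 * Real.exp (2*φ) - 2 * Real.exp (2*φ) * Real.cos (2*ψ))
      / (2 * Real.exp (2*φ) * Real.sin (2*ψ)) = Real.tan ψ := by
    rw [Real.tan_eq_sin_div_cos, Real.cos_two_mul, Real.sin_two_mul]
    rw [div_eq_div_iff (by positivity) (ne_of_gt hcos)]
    linear_combination (-4*Real.exp (2*φ)*Real.cos ψ) * hpyth
  rw [harg, Real.arctan_tan (by linarith [Real.pi_pos]) hψ1]
end
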